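/- For every natural number k and every rewarded index w ∈ W, the measurement probabilities satisfy (((R·O)^k)·ψ)(w)² · Q = π(w) · sin²((2k+1)·arcsin(√Q)). In other words, amplitude amplification enhances the total winning probability from Q to sin²((2k+1)·arcsin(√Q)) but preserves the ratio π(w)/Q: conditioned on obtaining a reward, the distribution over rewarded action sequences is the same for the quantum-enhanced agent as for the classical agent. -/

import Mathlib

open Real Matrix Finset

/-- Amplitude amplification preserves the conditional distribution over
rewarded action sequences: for every rewarded index `w`, the measurement
probability satisfies `(((R·O)^k)·ψ)(w)² · Q = π(w) · sin²((2k+1)·arcsin √Q)`. -/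
theorem grover_pow_preserves_conditional_distribution (n : ℕ) (pr : Fin n → ℝ)
    (hpr : ∀ i, 0 ≤ pr i) (hsum : ∑ i, pr i = 1)
    (W : Finset (Fin n)) (Q : ℝ) (hQ : Q = ∑ i ∈ W, pr i)
    (hQpos : 0 < Q) (hQlt : Q < 1)
    (ψ : Fin n → ℝ) (hψ : ∀ i, ψ i = Real.sqrt (pr i))
    (O : Matrix (Fin n) (Fin n) ℝ)
    (hO : O = Matrix.diagonal (fun i => if i ∈ W then (-1 : ℝ) else 1))
    (R : Matrix (Fin n) (Fin n) ℝ) (hR : R = 2 • Matrix.vecMulVec ψ ψ - 1) :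
    ∀ (k : ℕ) (w : Fin n), w ∈ W →
      (((R * O) ^ k).mulVec ψ w) ^ 2 * Q =
        pr w * Real.sin ((2 * k + 1) * Real.arcsin (Real.sqrt Q)) ^ 2 := by
  set θ := Real.arcsin (Real.sqrt Q) with hθ
  have h1Qpos : (0:ℝ) < 1 - Q := by linarith
  have hsQ : Real.sqrt Q ≠ 0 := by positivity
  have hs1Q : Real.sqrt (1 - Q) ≠ 0 := (Real.sqrt_pos.mpr h1Qpos).ne'
  have hsin : Real.sin θ = Real.sqrt Q := by
    rw [hθ]
    refine Real.sin_arcsin (le_trans (by norm_num) (Real.sqrt_nonneg Q)) ?_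
    rw [show (1:ℝ) = Real.sqrt 1 by simp]
    exact Real.sqrt_le_sqrt (by linarith)
  have hsinne : Real.sin θ ≠ 0 := by rw [hsin]; exact hsQ
  have hcos : Real.cos θ = Real.sqrt (1 - Q) := by
    rw [hθ, Real.cos_arcsin, Real.sq_sqrt hQpos.le]
  have hcosne : Real.cos θ ≠ 0 := by rw [hcos]; exact hs1Q
  have hψsq : ∀ i, ψ i ^ 2 = pr i := fun i => by
    rw [hψ i, Real.sq_sqrt (hpr i)]
  have hsumW : ∑ i ∈ W, ψ i ^ 2 = Q := by
    rw [hQ]; exact Finset.sum_congr rfl fun i _ => hψsq i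
  have htot : ∑ i, ψ i ^ 2 = 1 := by
    rw [← hsum]; exact Finset.sum_congr rfl fun i _ => hψsq i
  have hsumWc : ∑ i ∈ Wᶜ, ψ i ^ 2 = 1 - Q := by
    have h := Finset.sum_add_sum_compl W (fun i => ψ i ^ 2)
    rw [htot, hsumW] at h
    linarith
  have key : ∀ (k : ℕ) (i : Fin n), ((R * O) ^ k).mulVec ψ i =
      if i ∈ W then ψ i * (Real.sin ((2 * (k:ℝ) + 1) * θ) / Real.sin θ)
      else ψ i * (Real.cos ((2 * (k:ℝ) + 1) * θ) / Real.cos θ) := by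
    intro k
    induction k with
    | zero =>
      intro i
      have h1 : (2 * ((0:ℕ):ℝ) + 1) * θ = θ := by push_cast; ring
      simp only [pow_zero, Matrix.one_mulVec, h1]
      split <;> rw [div_self ‹_›] <;> ring
    | succ k ih =>
      intro i
      have hmv : ((R * O) ^ (k+1)).mulVec ψ
          = R.mulVec (O.mulVec (((R * O) ^ k).mulVec ψ)) := by
        rw [Matrix.mulVec_mulVec, Matrix.mulVec_mulVec, ← pow_succ']
      set x : Fin n → ℝ := fun j =>
        if j ∈ W then ψ j * (Real.sin ((2 * (k:ℝ) + 1) * θ) / Real.sin θ)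
        else ψ j * (Real.cos ((2 * (k:ℝ) + 1) * θ) / Real.cos θ) with hxdef
      have hx : ((R * O) ^ k).mulVec ψ = x := funext ih
      rw [hmv, hx]
      have hOx : O.mulVec x = fun j => (if j ∈ W then (-1:ℝ) else 1) * x j := by
        funext j
        rw [hO, Matrix.mulVec_diagonal]
      set y : Fin n → ℝ := fun j => (if j ∈ W then (-1:ℝ) else 1) * x j with hydef
      rw [hOx]
      have hinner : ∑ j, ψ j * y j = Real.cos ((2 * (k:ℝ) + 2) * θ) := by
        have hA : ∑ j ∈ W, ψ j * y j
            = ∑ j ∈ W, ψ j ^ 2 * (-(Real.sin ((2 * (k:ℝ) + 1) * θ) / Real.sin θ)) := by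
          refine Finset.sum_congr rfl fun j hj => ?_
          simp only [hydef, hxdef, if_pos hj]
          ring
        have hB : ∑ j ∈ Wᶜ, ψ j * y j
            = ∑ j ∈ Wᶜ, ψ j ^ 2 * (Real.cos ((2 * (k:ℝ) + 1) * θ) / Real.cos θ) := by
          refine Finset.sum_congr rfl fun j hj => ?_
          have hj' : j ∉ W := Finset.mem_compl.mp hj
          simp only [hydef, hxdef, if_neg hj']
          ring
        rw [← Finset.sum_add_sum_compl W (fun j => ψ j * y j), hA, hB,
          ← Finset.sum_mul, ← Finset.sum_mul, hsumW, hsumWc]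
        rw [show (1:ℝ) - Q = Real.cos θ ^ 2 by rw [hcos, Real.sq_sqrt h1Qpos.le],
          show Q = Real.sin θ ^ 2 by rw [hsin, Real.sq_sqrt hQpos.le]]
        have hang : (2 * (k:ℝ) + 2) * θ = (2 * (k:ℝ) + 1) * θ + θ := by ring
        rw [hang, Real.cos_add]
        field_simp
        ring
      have hRmul : ∀ z : Fin n → ℝ, R.mulVec z = fun i =>
          2 * (ψ i * ∑ j, ψ j * z j) - z i := by
        intro z
        funext i
        rw [hR, Matrix.sub_mulVec, Matrix.one_mulVec]
        simp only [Pi.sub_apply, Matrix.smul_mulVec, Pi.smul_apply,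
          smul_eq_mul]
        congr 1
        simp only [Matrix.mulVec, dotProduct, Matrix.vecMulVec_apply,
          mul_assoc]
        rw [← Finset.mul_sum]
        ring
      rw [hRmul y]
      simp only [hinner]
      have hang1 : (2 * ((k:ℝ) + 1) + 1) * θ = (2 * (k:ℝ) + 2) * θ + θ := by ring
      have hang2 : (2 * (k:ℝ) + 1) * θ = (2 * (k:ℝ) + 2) * θ - θ := by ring
      push_cast
      rw [hang1]
      by_cases hi : i ∈ W
      · simp only [hydef, hxdef, if_pos hi]
        rw [hang2, Real.sin_add, Real.sin_sub]
        field_simp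
        ring
      · simp only [hydef, hxdef, if_neg hi]
        rw [hang2, Real.cos_add, Real.cos_sub]
        field_simp
        ring
  intro k w hw
  have h := key k w
  rw [if_pos hw] at h
  rw [h, mul_pow, div_pow, hsin, Real.sq_sqrt hQpos.le, hψsq w]
  field_simp
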